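/- (Distance formula (4.3), edge A₃A₂) Assume B < 0 and sin²(π/u) > cos²(π/v) (so that a₂₂ < 0 and a₃₃ < 0, i.e. A₂ and A₃ are proper points). Then −a₂₃/√(a₂₂·a₃₃) = sin(π/u)·cos(π/w)/√(sin²(π/u) − cos²(π/v)) = √(1 − 1/a₃₃). (This quantity is cosh of the hyperbolic distance between the vertices A₃ and A₂ of the orthoscheme W_{uvw}.) -/

import Mathlib

open Real Matrix

/-- The Coxeter–Schläfli matrix of the complete orthoscheme `W_{uvw}`. -/
noncomputable def CSmatrix (u v w : ℝ) : Matrix (Fin 4) (Fin 4) ℝ :=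
  !![1, -cos (π/u), 0, 0;
     -cos (π/u), 1, -cos (π/v), 0;
     0, -cos (π/v), 1, -cos (π/w);
     0, 0, -cos (π/w), 1]

/-- The inverse of the Coxeter–Schläfli matrix; its entries are the `a_{ij}`. -/
noncomputable def CSinv (u v w : ℝ) : Matrix (Fin 4) (Fin 4) ℝ :=
  (CSmatrix u v w)⁻¹

noncomputable def CSadj (u v w : ℝ) : Matrix (Fin 4) (Fin 4) ℝ :=
  !![1-cos (π/v)^2-cos (π/w)^2, cos (π/u)*(1-cos (π/w)^2), cos (π/u)*cos (π/v), cos (π/u)*cos (π/v)*cos (π/w);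
     cos (π/u)*(1-cos (π/w)^2), 1-cos (π/w)^2, cos (π/v), cos (π/v)*cos (π/w);
     cos (π/u)*cos (π/v), cos (π/v), 1-cos (π/u)^2, cos (π/w)*(1-cos (π/u)^2);
     cos (π/u)*cos (π/v)*cos (π/w), cos (π/v)*cos (π/w), cos (π/w)*(1-cos (π/u)^2), 1-cos (π/u)^2-cos (π/v)^2]

lemma CS_det (u v w : ℝ) :
    (CSmatrix u v w).det =
      (1 - cos (π/u)^2 - cos (π/v)^2) - cos (π/w)^2 * (1 - cos (π/u)^2) := by
  simp [CSmatrix, Matrix.det_succ_row_zero, Fin.sum_univ_succ, Fin.succAbove]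
  ring

lemma CS_mul_adj (u v w : ℝ) :
    CSmatrix u v w * CSadj u v w = (CSmatrix u v w).det • (1 : Matrix (Fin 4) (Fin 4) ℝ) := by
  rw [CS_det]
  ext i j
  fin_cases i <;> fin_cases j <;>
    simp [CSmatrix, CSadj, Matrix.mul_apply, Fin.sum_univ_four, Matrix.one_apply] <;> ring

lemma CSinv_eq (u v w : ℝ) (hd : (CSmatrix u v w).det ≠ 0) :
    CSinv u v w = ((CSmatrix u v w).det)⁻¹ • CSadj u v w := by
  unfold CSinv
  apply Matrix.inv_eq_right_inv
  rw [Matrix.mul_smul, CS_mul_adj, smul_smul, inv_mul_cancel₀ hd, one_smul]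

theorem stmt8 (u v w : ℝ) (hu : 3 ≤ u) (hv : 3 ≤ v) (hw : 3 ≤ w)
    (hBneg : (CSmatrix u v w).det < 0)
    (h1 : cos (π/v) ^ 2 < sin (π/u) ^ 2) :
    CSinv u v w 2 2 < 0 ∧ CSinv u v w 3 3 < 0 ∧
    -CSinv u v w 2 3 / Real.sqrt (CSinv u v w 2 2 * CSinv u v w 3 3) =
      sin (π/u) * cos (π/w) / Real.sqrt (sin (π/u) ^ 2 - cos (π/v) ^ 2) ∧
    sin (π/u) * cos (π/w) / Real.sqrt (sin (π/u) ^ 2 - cos (π/v) ^ 2) =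
      Real.sqrt (1 - 1 / CSinv u v w 3 3) := by
  set s := sin (π/u) with hs
  set b := cos (π/v) with hb
  set c := cos (π/w) with hc
  set D := (CSmatrix u v w).det with hD
  have hDne : D ≠ 0 := ne_of_lt hBneg
  have hspos : 0 < s := by
    apply Real.sin_pos_of_pos_of_lt_pi
    · positivity
    · calc π / u ≤ π / 3 := by
            apply div_le_div_of_nonneg_left pi_pos.le (by norm_num) hu
          _ < π := by linarith [pi_pos]
  have hcpos : 0 < c := by
    apply Real.cos_pos_of_mem_Ioo
    constructor
    · have : 0 < π / w := by positivity
      linarith [pi_pos]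
    · calc π / w ≤ π / 3 := by
            apply div_le_div_of_nonneg_left pi_pos.le (by norm_num) hw
          _ < π / 2 := by linarith [pi_pos]
  have hPpos : 0 < s ^ 2 - b ^ 2 := by linarith
  set P := s ^ 2 - b ^ 2 with hP
  have hsqP : Real.sqrt P ^ 2 = P := Real.sq_sqrt hPpos.le
  have hsqPpos : 0 < Real.sqrt P := Real.sqrt_pos.mpr hPpos
  have hsq : s ^ 2 = 1 - cos (π/u) ^ 2 := by
    rw [hs]; nlinarith [sin_sq_add_cos_sq (π/u)]
  -- entries
  have e22 : CSinv u v w 2 2 = D⁻¹ * s ^ 2 := by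
    rw [CSinv_eq u v w hDne, ← hD]
    simp [CSadj, hsq]
  have e33 : CSinv u v w 3 3 = D⁻¹ * P := by
    rw [CSinv_eq u v w hDne, ← hD]
    simp [CSadj, hP, hsq]
    exact Or.inl rfl
  have e23 : CSinv u v w 2 3 = D⁻¹ * (c * s ^ 2) := by
    rw [CSinv_eq u v w hDne, ← hD]
    simp [CSadj, hsq]
    exact Or.inl (Or.inl rfl)
  have hDP : P - D = c ^ 2 * s ^ 2 := by
    rw [hP, hD, CS_det, hsq]; ring
  have h22 : CSinv u v w 2 2 < 0 := by
    rw [e22]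
    apply mul_neg_of_neg_of_pos (inv_neg''.mpr hBneg) (by positivity)
  have h33 : CSinv u v w 3 3 < 0 := by
    rw [e33]
    exact mul_neg_of_neg_of_pos (inv_neg''.mpr hBneg) hPpos
  refine ⟨h22, h33, ?_, ?_⟩
  · have hsqrt : Real.sqrt (CSinv u v w 2 2 * CSinv u v w 3 3) = s * Real.sqrt P / (-D) := by
      rw [e22, e33]
      have : D⁻¹ * s ^ 2 * (D⁻¹ * P) = (s * Real.sqrt P / (-D)) ^ 2 := by
        field_simp
        rw [hsqP]
      rw [this, Real.sqrt_sq (div_nonneg (by positivity) (by linarith))]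
    rw [hsqrt, e23]
    field_simp
  · have hsq2 : (s * c / Real.sqrt P) ^ 2 = s ^ 2 * c ^ 2 / P := by
      rw [div_pow, mul_pow, hsqP]
    have harg : 1 - 1 / CSinv u v w 3 3 = (s * c / Real.sqrt P) ^ 2 := by
      rw [e33, hsq2]
      field_simp
      nlinarith [hDP]
    rw [harg, Real.sqrt_sq (div_nonneg (mul_nonneg hspos.le hcpos.le) hsqPpos.le)]
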